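/- Let P be BT-consistent with respect to r* with strictly positive negative conditional and P_X strictly positive, let B > 0, let ℋ be a set of score functions all bounded in absolute value by B with r* ∈ ℋ, and suppose λ > 0 satisfies E_{P̃}[ (Δ_f − Δ_g)² ] ≥ λ·Ṽar_Q(f − g) for all f, g ∈ ℋ. Then for every r ∈ ℋ, E_{Q_pair}[ (Δ_r(x,y,y') − Δ_{r*}(x,y,y'))² ] ≤ (4/(λ·Z·c_B))·( L_BT(r) − L_BT(r*) ), where c_B = σ(2B)(1 − σ(2B)). -/

import Mathlib

open scoped BigOperators

/-- The sigmoid function σ(t) = 1/(1+e^{-t}). -/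
noncomputable def sigmoid (t : ℝ) : ℝ := 1 / (1 + Real.exp (-t))

lemma sig_pos (t : ℝ) : 0 < sigmoid t := by
  unfold sigmoid; positivity

lemma sig_lt_one (t : ℝ) : sigmoid t < 1 := by
  unfold sigmoid
  rw [div_lt_one (by positivity)]
  linarith [Real.exp_pos (-t)]

lemma one_sub_sig (t : ℝ) : 1 - sigmoid t = sigmoid (-t) := by
  unfold sigmoid
  have h1 : (0:ℝ) < 1 + Real.exp (-t) := by positivity
  have h2 : (0:ℝ) < 1 + Real.exp (t) := by positivity
  rw [neg_neg]
  field_simp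
  have he : Real.exp (-t) * Real.exp t = 1 := by rw [← Real.exp_add]; simp
  linear_combination he

lemma hasDerivAt_sig (t : ℝ) : HasDerivAt sigmoid (sigmoid t * (1 - sigmoid t)) t := by
  have h1 : (0:ℝ) < 1 + Real.exp (-t) := by positivity
  have h : HasDerivAt (fun u : ℝ => 1 + Real.exp (-u)) (-Real.exp (-t)) t := by
    simpa using ((Real.hasDerivAt_exp (-t)).comp t ((hasDerivAt_id t).neg)).const_add 1
  have := h.inv (ne_of_gt h1)
  have hf : ∀ u, sigmoid u = (fun u => 1 + Real.exp (-u))⁻¹ u := by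
    intro u; simp [sigmoid, one_div]
  refine (this.congr_of_eventuallyEq (Filter.Eventually.of_forall hf)).congr_deriv ?_
  · rw [one_sub_sig]
    unfold sigmoid
    have he : Real.exp (-t) * Real.exp t = 1 := by rw [← Real.exp_add]; simp
    field_simp
    nlinarith [Real.exp_pos (-t), Real.exp_pos t]

lemma continuous_sigmoid' : Continuous sigmoid :=
  continuous_iff_continuousAt.mpr fun t => (hasDerivAt_sig t).continuousAt

lemma sig_mul_eq (t : ℝ) :
    sigmoid t * (1 - sigmoid t) = (2 + Real.exp t + Real.exp (-t))⁻¹ := by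
  rw [one_sub_sig]
  unfold sigmoid
  have he : Real.exp (-t) * Real.exp t = 1 := by rw [← Real.exp_add]; simp
  have h1 : (0:ℝ) < 1 + Real.exp (-t) := by positivity
  have h2 : (0:ℝ) < 1 + Real.exp t := by positivity
  have h3 : (0:ℝ) < 2 + Real.exp t + Real.exp (-t) := by positivity
  field_simp
  nlinarith [Real.exp_pos t, Real.exp_pos (-t)]

lemma sig_deriv_lower {c t : ℝ} (h : |t| ≤ c) :
    sigmoid c * (1 - sigmoid c) ≤ sigmoid t * (1 - sigmoid t) := by
  rw [sig_mul_eq, sig_mul_eq]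
  have hc : 0 ≤ c := le_trans (abs_nonneg t) h
  have hcosh : Real.cosh t ≤ Real.cosh c := by
    rw [Real.cosh_le_cosh]
    rwa [abs_of_nonneg hc]
  rw [Real.cosh_eq, Real.cosh_eq] at hcosh
  have h3 : (0:ℝ) < 2 + Real.exp t + Real.exp (-t) := by positivity
  apply inv_anti₀ h3
  linarith

lemma sig_slope {c a t : ℝ} (ha : -c ≤ a) (hat : a ≤ t) (htc : t ≤ c) :
    sigmoid c * (1 - sigmoid c) * (t - a) ≤ sigmoid t - sigmoid a := by
  set K := sigmoid c * (1 - sigmoid c) with hK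
  have hmono : MonotoneOn (fun x => sigmoid x - K * x) (Set.Icc (-c) c) := by
    apply monotoneOn_of_deriv_nonneg (convex_Icc _ _)
    · exact ((continuous_sigmoid').sub (continuous_const.mul continuous_id)).continuousOn
    · intro x _
      have hd : HasDerivAt (fun x => sigmoid x - K * x) (sigmoid x * (1 - sigmoid x) - K) x := by
        have := (hasDerivAt_sig x).sub ((hasDerivAt_id' x).const_mul K)
        rw [mul_one] at this; exact this
      exact hd.differentiableAt.differentiableWithinAt
    · intro x hx
      rw [interior_Icc] at hx
      have hd : HasDerivAt (fun x => sigmoid x - K * x) (sigmoid x * (1 - sigmoid x) - K) x := by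
        have := (hasDerivAt_sig x).sub ((hasDerivAt_id' x).const_mul K)
        rw [mul_one] at this; exact this
      rw [hd.deriv]
      have : K ≤ sigmoid x * (1 - sigmoid x) :=
        sig_deriv_lower (abs_le.mpr ⟨le_of_lt hx.1, le_of_lt hx.2⟩)
      linarith
  have h := hmono (Set.mem_Icc.mpr ⟨ha, le_trans hat htc⟩)
      (Set.mem_Icc.mpr ⟨le_trans ha hat, htc⟩) hat
  simp only at h
  nlinarith

lemma hasDerivAt_logsig (t : ℝ) :
    HasDerivAt (fun u => Real.log (sigmoid u)) (1 - sigmoid t) t := by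
  have h := (hasDerivAt_sig t).log (ne_of_gt (sig_pos t))
  convert h using 1
  field_simp [ne_of_gt (sig_pos t)]

lemma hasDerivAt_logsig_neg (t : ℝ) :
    HasDerivAt (fun u => Real.log (sigmoid (-u))) (-sigmoid t) t := by
  have h0 : HasDerivAt (fun u : ℝ => sigmoid (-u)) (-(sigmoid (-t) * (1 - sigmoid (-t)))) t := by
    have := (hasDerivAt_sig (-t)).comp t (hasDerivAt_neg' t)
    rw [mul_neg_one] at this; exact this
  have h := h0.log (ne_of_gt (sig_pos (-t)))
  convert h using 1
  have : (1 : ℝ) - sigmoid (-t) = sigmoid t := by rw [one_sub_sig, neg_neg]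
  rw [this]
  field_simp [ne_of_gt (sig_pos (-t))]

lemma key_sc {c a d : ℝ} (ha : |a| ≤ c) (hd : |d| ≤ c) :
    sigmoid c * (1 - sigmoid c) / 2 * (d - a) ^ 2 ≤
      (-(sigmoid a * Real.log (sigmoid d)) - (1 - sigmoid a) * Real.log (sigmoid (-d)))
      - (-(sigmoid a * Real.log (sigmoid a)) - (1 - sigmoid a) * Real.log (sigmoid (-a))) := by
  set K := sigmoid c * (1 - sigmoid c) with hK
  set G : ℝ → ℝ := fun t =>
    (-(sigmoid a * Real.log (sigmoid t)) - (1 - sigmoid a) * Real.log (sigmoid (-t)))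
      - K / 2 * (t - a) ^ 2 with hGdef
  have hG : ∀ t, HasDerivAt G (sigmoid t - sigmoid a - K * (t - a)) t := by
    intro t
    have h1 : HasDerivAt (fun u => -(sigmoid a * Real.log (sigmoid u)))
        (-(sigmoid a * (1 - sigmoid t))) t :=
      (((hasDerivAt_logsig t).const_mul (sigmoid a))).neg
    have h2 : HasDerivAt (fun u => (1 - sigmoid a) * Real.log (sigmoid (-u)))
        ((1 - sigmoid a) * (-sigmoid t)) t :=
      (hasDerivAt_logsig_neg t).const_mul _
    have h3 : HasDerivAt (fun u : ℝ => K / 2 * (u - a) ^ 2) (K / 2 * (2 * (t - a))) t := by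
      have := (((hasDerivAt_id t).sub_const a).pow 2).const_mul (K/2)
      simpa using this
    have := (h1.sub h2).sub h3
    exact this.congr_deriv (by ring)
  have hac : -c ≤ a ∧ a ≤ c := abs_le.mp ha
  have hdc : -c ≤ d ∧ d ≤ c := abs_le.mp hd
  have hmain : G a ≤ G d := by
    rcases le_total a d with hle | hle
    · have hmono : MonotoneOn G (Set.Icc a c) := by
        apply monotoneOn_of_deriv_nonneg (convex_Icc _ _)
        · exact fun x _ => ((hG x).continuousAt).continuousWithinAt
        · exact fun x _ => (hG x).differentiableAt.differentiableWithinAt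
        · intro x hx
          rw [interior_Icc] at hx
          rw [(hG x).deriv]
          have := sig_slope hac.1 (le_of_lt hx.1) (le_of_lt hx.2)
          rw [← hK] at this
          linarith
      exact hmono (Set.mem_Icc.mpr ⟨le_refl a, hac.2⟩) (Set.mem_Icc.mpr ⟨hle, hdc.2⟩) hle
    · have hanti : AntitoneOn G (Set.Icc (-c) a) := by
        apply antitoneOn_of_deriv_nonpos (convex_Icc _ _)
        · exact fun x _ => ((hG x).continuousAt).continuousWithinAt
        · exact fun x _ => (hG x).differentiableAt.differentiableWithinAt
        · intro x hx
          rw [interior_Icc] at hx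
          rw [(hG x).deriv]
          have := sig_slope (le_of_lt hx.1) (le_of_lt hx.2) hac.2
          rw [← hK] at this
          nlinarith
      exact hanti (Set.mem_Icc.mpr ⟨hdc.1, hle⟩) (Set.mem_Icc.mpr ⟨hac.1, le_refl a⟩) hle
  have := hmain
  rw [hGdef] at this
  simp only at this
  nlinarith [this]

open Finset in
lemma sq_expand {Y : Type*} [Fintype Y] (q h : Y → ℝ) (hq : ∑ y, q y = 1) :
    ∑ y, ∑ y', q y * q y' * (h y - h y') ^ 2 =
      2 * ((∑ y, q y * h y ^ 2) - (∑ y, q y * h y) ^ 2) := by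
  have expand : ∀ y y' : Y, q y * q y' * (h y - h y') ^ 2 =
      (q y * h y ^ 2) * q y' - 2 * ((q y * h y) * (q y' * h y')) + q y * (q y' * h y' ^ 2) := by
    intros; ring
  simp_rw [expand, Finset.sum_add_distrib, Finset.sum_sub_distrib, ← Finset.mul_sum,
    ← Finset.sum_mul, hq]
  ring

open Finset in
lemma var_nonneg {Y : Type*} [Fintype Y] (q h : Y → ℝ) (hq0 : ∀ y, 0 ≤ q y)
    (hq : ∑ y, q y = 1) : (∑ y, q y * h y) ^ 2 ≤ ∑ y, q y * h y ^ 2 := by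
  have key := Finset.sum_mul_sq_le_sq_mul_sq Finset.univ (fun y => Real.sqrt (q y))
    (fun y => Real.sqrt (q y) * h y)
  have h1 : ∀ y : Y, Real.sqrt (q y) * (Real.sqrt (q y) * h y) = q y * h y := by
    intro y; rw [← mul_assoc, Real.mul_self_sqrt (hq0 y)]
  have h2 : ∀ y : Y, Real.sqrt (q y) ^ 2 = q y := fun y => Real.sq_sqrt (hq0 y)
  have h3 : ∀ y : Y, (Real.sqrt (q y) * h y) ^ 2 = q y * h y ^ 2 := by
    intro y; rw [mul_pow, h2]
  simp_rw [h1, h2, h3, hq, one_mul] at key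
  exact key

lemma bt_identity (px pmy pmy' ry ry' : ℝ) (hpx : 0 < px) (hy : 0 < pmy) (hy' : 0 < pmy') :
    px * (Real.exp ry * pmy) * pmy' =
      (px * (Real.exp ry * pmy) * pmy' + px * (Real.exp ry' * pmy') * pmy) *
        sigmoid (ry - ry') := by
  unfold sigmoid
  rw [show -(ry - ry') = ry' - ry by ring]
  have h1 : (0:ℝ) < 1 + Real.exp (ry' - ry) := by positivity
  have he : Real.exp (ry' - ry) * Real.exp ry = Real.exp ry' := by
    rw [← Real.exp_add]; ring_nf
  field_simp
  linear_combination he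

/-- The population Bradley–Terry objective. -/
noncomputable def LBT {X Y : Type*} [Fintype X] [Fintype Y]
    (P : X → Y → Y → ℝ) (r : X → Y → ℝ) : ℝ :=
  -∑ x, ∑ y, ∑ y', P x y y' * Real.log (sigmoid (r x y - r x y'))

/-- Normalizing constant Z of the comparison distribution P̃. -/
noncomputable def Zconst {X Y : Type*} [Fintype X] [Fintype Y] [DecidableEq Y]
    (P : X → Y → Y → ℝ) : ℝ :=
  (∑ x, ∑ y, ∑ y', if y ≠ y' then P x y y' + P x y' y else 0) / 2

/-- Expectation under the comparison distribution P̃ of a symmetric function of (x,{y,y'}). -/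
noncomputable def ePt {X Y : Type*} [Fintype X] [Fintype Y] [DecidableEq Y]
    (P : X → Y → Y → ℝ) (f : X → Y → Y → ℝ) : ℝ :=
  (∑ x, ∑ y, ∑ y', if y ≠ y' then (P x y y' + P x y' y) * f x y y' else 0) /
    (2 * Zconst P)

/-- Expectation under Q_pair, where x ∼ Q_x and y, y' are i.i.d. from Q_y(·|x). -/
noncomputable def eQpair {X Y : Type*} [Fintype X] [Fintype Y]
    (Qx : X → ℝ) (Qy : X → Y → ℝ) (f : X → Y → Y → ℝ) : ℝ :=
  ∑ x, ∑ y, ∑ y', Qx x * Qy x y * Qy x y' * f x y y'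

/-- Ṽar_Q(r) = E_{x∼Q_x}[ Var_{y∼Q_y(·|x)}[ r(x,y) ] ]. -/
noncomputable def tVar {X Y : Type*} [Fintype X] [Fintype Y]
    (Qx : X → ℝ) (Qy : X → Y → ℝ) (r : X → Y → ℝ) : ℝ :=
  ∑ x, Qx x * ((∑ y, Qy x y * (r x y) ^ 2) - (∑ y, Qy x y * r x y) ^ 2)

set_option maxHeartbeats 1200000 in
/-- Realizable estimation bound: for a BT-consistent P with connectivity constant λ for the
bounded class ℋ ∋ r*, every r ∈ ℋ satisfies
E_{Q_pair}[(Δ_r − Δ_{r*})²] ≤ (4/(λ·Z·c_B))·(L_BT(r) − L_BT(r*)), c_B = σ(2B)(1−σ(2B)). -/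
theorem stmt_17 {X Y : Type*} [Fintype X] [Fintype Y] [DecidableEq Y]
    [Nonempty X] [Nonempty Y]
    (P : X → Y → Y → ℝ) (PX : X → ℝ) (pplus pminus : X → Y → ℝ)
    (rstar : X → Y → ℝ)
    (hPX0 : ∀ x, 0 < PX x) (hPX1 : ∑ x, PX x = 1)
    (hm0 : ∀ x y, 0 < pminus x y)
    (hp1 : ∀ x, ∑ y, pplus x y = 1) (hm1 : ∀ x, ∑ y, pminus x y = 1)
    (hlink : ∀ x y, pplus x y = Real.exp (rstar x y) * pminus x y)
    (hfact : ∀ x yp ym, P x yp ym = PX x * pplus x yp * pminus x ym)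
    (hZ : 0 < Zconst P)
    (Qx : X → ℝ) (Qy : X → Y → ℝ)
    (hQx0 : ∀ x, 0 ≤ Qx x) (hQx1 : ∑ x, Qx x = 1)
    (hQy0 : ∀ x y, 0 ≤ Qy x y) (hQy1 : ∀ x, ∑ y, Qy x y = 1)
    (B : ℝ) (hB : 0 < B)
    (H : Set (X → Y → ℝ)) (hHB : ∀ f ∈ H, ∀ x y, |f x y| ≤ B)
    (hrstarH : rstar ∈ H)
    (lam : ℝ) (hlam : 0 < lam)
    (hconn : ∀ f ∈ H, ∀ g ∈ H,
      ePt P (fun x y y' => ((f x y - f x y') - (g x y - g x y')) ^ 2) ≥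
        lam * tVar Qx Qy (f - g)) :
    ∀ r ∈ H,
      eQpair Qx Qy (fun x y y' => ((r x y - r x y') - (rstar x y - rstar x y')) ^ 2) ≤
        (4 / (lam * Zconst P * (sigmoid (2 * B) * (1 - sigmoid (2 * B))))) *
          (LBT P r - LBT P rstar) := by
  intro r hr
  set K := sigmoid (2 * B) * (1 - sigmoid (2 * B)) with hKdef
  have hKpos : 0 < K := by
    have h1 := sig_pos (2 * B)
    have h2 := sig_lt_one (2 * B)
    rw [hKdef]
    nlinarith
  set f : X → Y → Y → ℝ :=
    fun x y y' => ((r x y - r x y') - (rstar x y - rstar x y')) ^ 2 with hfdef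
  -- positivity of P entries
  have hPpos : ∀ x y y', 0 < P x y y' := by
    intro x y y'
    rw [hfact, hlink]
    have := Real.exp_pos (rstar x y)
    have := hm0 x y
    have := hm0 x y'
    have := hPX0 x
    positivity
  -- BT identity
  have hid : ∀ x y y', P x y y' =
      (P x y y' + P x y' y) * sigmoid (rstar x y - rstar x y') := by
    intro x y y'
    rw [hfact x y y', hfact x y' y, hlink, hlink]
    exact bt_identity (PX x) (pminus x y) (pminus x y') (rstar x y) (rstar x y')
      (hPX0 x) (hm0 x y) (hm0 x y')
  -- margin bounds
  have hbound : ∀ (g : X → Y → ℝ), g ∈ H → ∀ x y y', |g x y - g x y'| ≤ 2 * B := by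
    intro g hg x y y'
    have h1 := hHB g hg x y
    have h2 := hHB g hg x y'
    calc |g x y - g x y'| ≤ |g x y| + |g x y'| := abs_sub _ _
      _ ≤ 2 * B := by linarith
  -- pointwise strong convexity inequality
  set T : X → Y → Y → ℝ := fun x y y' =>
    P x y y' * (Real.log (sigmoid (rstar x y - rstar x y')) -
      Real.log (sigmoid (r x y - r x y'))) with hTdef
  have hpt : ∀ x y y',
      (P x y y' + P x y' y) * (K / 2) * f x y y' ≤ T x y y' + T x y' y := by
    intro x y y'
    have ha : |rstar x y - rstar x y'| ≤ 2 * B := hbound rstar hrstarH x y y'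
    have hd : |r x y - r x y'| ≤ 2 * B := hbound r hr x y y'
    set a := rstar x y - rstar x y' with hadef
    set d := r x y - r x y' with hddef
    set s := P x y y' + P x y' y with hsdef
    have hs0 : 0 ≤ s := by
      have := hPpos x y y'
      have := hPpos x y' y
      positivity
    have hid1 : P x y y' = s * sigmoid a := hid x y y'
    have hswap : rstar x y' - rstar x y = -a := by simp only [hadef, neg_sub]
    have hid2 : P x y' y = s * sigmoid (-a) := by
      have := hid x y' y
      rw [hswap] at this
      rw [this, hsdef]; ring_nf
    have hkey := key_sc (c := 2 * B) ha hd
    have hmul := mul_le_mul_of_nonneg_left hkey hs0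
    have hfds : f x y y' = (d - a) ^ 2 := by simp only [hfdef, hadef, hddef]
    have hTa : T x y y' = s * sigmoid a * (Real.log (sigmoid a) - Real.log (sigmoid d)) := by
      rw [hTdef]; simp only [← hadef, ← hddef, hid1]
    have hTb : T x y' y = s * sigmoid (-a) * (Real.log (sigmoid (-a)) - Real.log (sigmoid (-d))) := by
      rw [hTdef]
      have hswap2 : r x y' - r x y = -d := by simp only [hddef, neg_sub]
      simp only [hswap, hswap2, hid2]
    rw [← hKdef] at hmul
    rw [one_sub_sig] at hmul
    rw [hTa, hTb, hfds]
    nlinarith [hmul]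
  -- L_BT difference as a triple sum
  have hL : LBT P r - LBT P rstar = ∑ x, ∑ y, ∑ y', T x y y' := by
    rw [LBT, LBT, neg_sub_neg]
    simp_rw [← Finset.sum_sub_distrib, ← mul_sub]
    rfl
  -- symmetrization
  have hsym : (∑ x, ∑ y, ∑ y', T x y y') = ∑ x, ∑ y, ∑ y', T x y' y :=
    Finset.sum_congr rfl fun x _ => Finset.sum_comm
  have h2L : 2 * (LBT P r - LBT P rstar) = ∑ x, ∑ y, ∑ y', (T x y y' + T x y' y) := by
    simp_rw [Finset.sum_add_distrib]
    rw [← hsym, hL]; ring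
  -- sum S
  set S := ∑ x, ∑ y, ∑ y', (P x y y' + P x y' y) * f x y y' with hSdef
  have hS_ge : (K / 2) * S ≤ 2 * (LBT P r - LBT P rstar) := by
    rw [h2L, hSdef, Finset.mul_sum]
    refine Finset.sum_le_sum fun x _ => ?_
    rw [Finset.mul_sum]
    refine Finset.sum_le_sum fun y _ => ?_
    rw [Finset.mul_sum]
    refine Finset.sum_le_sum fun y' _ => ?_
    have := hpt x y y'
    nlinarith [this]
  -- ePt of f equals S / (2Z)
  have hePt : ePt P f = S / (2 * Zconst P) := by
    rw [ePt, hSdef]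
    congr 1
    refine Finset.sum_congr rfl fun x _ => Finset.sum_congr rfl fun y _ =>
      Finset.sum_congr rfl fun y' _ => ?_
    by_cases h : y = y'
    · subst h; simp [hfdef]
    · simp [h]
  -- connectivity
  have hconn' := hconn r hr rstar hrstarH
  have hconnf : lam * tVar Qx Qy (r - rstar) ≤ S / (2 * Zconst P) := by
    rw [← hePt]
    exact hconn'
  -- variance nonneg
  have htv : 0 ≤ tVar Qx Qy (r - rstar) := by
    rw [tVar]
    refine Finset.sum_nonneg fun x _ => mul_nonneg (hQx0 x) ?_
    have h := var_nonneg (Qy x) (fun y => r x y - rstar x y) (hQy0 x) (hQy1 x)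
    simp only [Pi.sub_apply]
    linarith [h]
  -- eQpair = 2 * tVar
  have hQ : eQpair Qx Qy f = 2 * tVar Qx Qy (r - rstar) := by
    rw [eQpair, tVar, Finset.mul_sum]
    refine Finset.sum_congr rfl fun x _ => ?_
    have hexp := sq_expand (Qy x) (fun y => r x y - rstar x y) (hQy1 x)
    have hstep : (∑ y, ∑ y', Qx x * Qy x y * Qy x y' * f x y y')
        = Qx x * ∑ y, ∑ y', Qy x y * Qy x y' *
            ((r x y - rstar x y) - (r x y' - rstar x y')) ^ 2 := by
      rw [Finset.mul_sum]
      refine Finset.sum_congr rfl fun y _ => ?_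
      rw [Finset.mul_sum]
      refine Finset.sum_congr rfl fun y' _ => ?_
      rw [hfdef]; ring
    rw [hstep, hexp]
    simp only [Pi.sub_apply]
    ring
  -- final assembly
  rw [hQ, div_mul_eq_mul_div, le_div_iff₀ (mul_pos (mul_pos hlam hZ) hKpos)]
  have hZK : 0 < 2 * Zconst P := by linarith
  have h1 : lam * tVar Qx Qy (r - rstar) * (2 * Zconst P) ≤ S :=
    (le_div_iff₀ hZK).mp hconnf
  nlinarith [hS_ge, h1, htv, mul_pos hlam hZ, hKpos, hZ, hlam]
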